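/- Let 0 < t < s and set τ = (1/2) * Real.log (s / (s - t)). Let N : ℝ[X] → ℝ[X] be the number operator N q = X * derivative q - s • derivative (derivative q). Then for every polynomial p ∈ ℝ[X] and every x ∈ ℝ, the Hermite semigroup equals the dilated heat semigroup: ∑'_{k : ℕ} ((-τ)^k / k!) * Polynomial.eval x (N^[k] p) = Polynomial.eval (Real.sqrt ((s - t)/s) * x) (e^{tΔ/2} p), where e^{tΔ/2} p = ∑_{k : 2k ≤ natDegree p} ((t/2)^k / k!) • derivative^[2k] p. -/

import Mathlib

open Polynomial

/-- The number operator `N_s q = X q' - s q''` on one-variable polynomials. -/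
noncomputable def numberOp (s : ℝ) (q : Polynomial ℝ) : Polynomial ℝ :=
  X * derivative q - s • derivative (derivative q)

/-- The heat operator `e^{tΔ/2} p = ∑_{2k ≤ natDegree p} ((t/2)^k/k!) p^{(2k)}` on
one-variable polynomials. -/
noncomputable def heatOp (t : ℝ) (p : Polynomial ℝ) : Polynomial ℝ :=
  ∑ k ∈ Finset.range (p.natDegree / 2 + 1),
    ((t / 2) ^ k / (k.factorial : ℝ)) • (⇑(derivative (R := ℝ)))^[2 * k] p

namespace HermiteAux

open Finset

/-- General heat-type operator `e^{aΔ} p`. -/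
noncomputable def E (a : ℝ) (p : Polynomial ℝ) : Polynomial ℝ :=
  ∑ k ∈ Finset.range (p.natDegree + 1),
    (a ^ k / (k.factorial : ℝ)) • (⇑(derivative (R := ℝ)))^[2 * k] p

lemma E_eq (a : ℝ) (p : Polynomial ℝ) {M : ℕ} (h : p.natDegree < M) :
    E a p = ∑ k ∈ Finset.range M,
      (a ^ k / (k.factorial : ℝ)) • (⇑(derivative (R := ℝ)))^[2 * k] p := by
  apply Finset.sum_subset (Finset.range_subset_range.mpr h)
  intro k hk hk'
  simp only [Finset.mem_range, not_lt] at hk hk'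
  rw [Polynomial.iterate_derivative_eq_zero (by omega), smul_zero]

lemma natDegree_E_le (a : ℝ) (p : Polynomial ℝ) : (E a p).natDegree ≤ p.natDegree := by
  apply Polynomial.natDegree_sum_le_of_forall_le
  intro k _
  exact (natDegree_smul_le _ _).trans ((p.natDegree_iterate_derivative (2*k)).trans (by omega))

lemma iterD_add (m : ℕ) (p q : Polynomial ℝ) :
    (⇑(derivative (R := ℝ)))^[m] (p + q) =
      (⇑(derivative (R := ℝ)))^[m] p + (⇑(derivative (R := ℝ)))^[m] q := by
  induction m with
  | zero => simp
  | succ m ih => simp [Function.iterate_succ_apply', ih]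

lemma iterD_sum {ι : Type*} (m : ℕ) (u : Finset ι) (f : ι → Polynomial ℝ) :
    (⇑(derivative (R := ℝ)))^[m] (∑ i ∈ u, f i) = ∑ i ∈ u, (⇑(derivative (R := ℝ)))^[m] (f i) := by
  classical
  induction u using Finset.induction_on with
  | empty => simp [Polynomial.iterate_derivative_zero]
  | insert _ _ hnot ih => simp [Finset.sum_insert hnot, iterD_add, ih]

lemma E_zero_apply (p : Polynomial ℝ) : E 0 p = p := by
  unfold E
  rw [Finset.sum_eq_single 0]
  · simp
  · intro k _ hk
    rw [zero_pow hk, zero_div, zero_smul]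
  · intro h; exact absurd (Finset.mem_range.mpr (by omega)) h

lemma E_zero (a : ℝ) : E a 0 = 0 := by
  unfold E; simp

lemma E_smul (a c : ℝ) (p : Polynomial ℝ) : E a (c • p) = c • E a p := by
  rw [E_eq a (c • p) (lt_of_le_of_lt (natDegree_smul_le c p) (Nat.lt_succ_self _)),
    E_eq a p (Nat.lt_succ_self _), Finset.smul_sum]
  refine Finset.sum_congr rfl fun k _ => ?_
  rw [Polynomial.iterate_derivative_smul, smul_comm]

lemma E_add (a : ℝ) (p q : Polynomial ℝ) : E a (p + q) = E a p + E a q := by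
  set M := max p.natDegree q.natDegree + 1 with hM
  rw [E_eq a (p+q) (M := M) (lt_of_le_of_lt (natDegree_add_le p q) (Nat.lt_succ_self _)),
    E_eq a p (M := M) (Nat.lt_succ_of_le (le_max_left _ _)),
    E_eq a q (M := M) (Nat.lt_succ_of_le (le_max_right _ _)), ← Finset.sum_add_distrib]
  refine Finset.sum_congr rfl fun k _ => ?_
  rw [iterD_add, smul_add]

lemma E_sum {ι : Type*} (a : ℝ) (u : Finset ι) (f : ι → Polynomial ℝ) :
    E a (∑ i ∈ u, f i) = ∑ i ∈ u, E a (f i) := by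
  classical
  induction u using Finset.induction_on with
  | empty => simp [E_zero]
  | insert _ _ hnot ih => simp [Finset.sum_insert hnot, E_add, ih]

lemma derivative_E (a : ℝ) (p : Polynomial ℝ) :
    derivative (E a p) = E a (derivative p) := by
  rw [E_eq a (derivative p) (M := p.natDegree + 1)
    (lt_of_le_of_lt (p.natDegree_derivative_le) (by omega)), E, map_sum]
  refine Finset.sum_congr rfl fun k _ => ?_
  rw [derivative_smul]
  congr 1
  rw [← Function.iterate_succ_apply' derivative (2*k) p, ← Function.iterate_succ_apply]

lemma E_comp (a b : ℝ) (p : Polynomial ℝ) : E a (E b p) = E (a + b) p := by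
  classical
  set M := p.natDegree + 1 with hM
  have hstep : ∀ j : ℕ, (⇑(derivative (R := ℝ)))^[2 * j] (E b p) =
      ∑ k ∈ Finset.range M, (b ^ k / (k.factorial : ℝ)) •
        (⇑(derivative (R := ℝ)))^[2 * (j + k)] p := by
    intro j
    rw [E, iterD_sum]
    refine Finset.sum_congr rfl fun k _ => ?_
    rw [Polynomial.iterate_derivative_smul]
    congr 1
    rw [← Function.iterate_add_apply]
    congr 1
    omega
  rw [E_eq a (E b p) (M := M) (lt_of_le_of_lt (natDegree_E_le b p) (Nat.lt_succ_self _))]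
  simp only [hstep, Finset.smul_sum, smul_smul]
  rw [← Finset.sum_product']
  set F : ℕ × ℕ → Polynomial ℝ := fun jk =>
    (a ^ jk.1 / (jk.1.factorial : ℝ) * (b ^ jk.2 / (jk.2.factorial : ℝ))) •
      (⇑(derivative (R := ℝ)))^[2 * (jk.1 + jk.2)] p with hF
  have h1 : ∑ jk ∈ Finset.range M ×ˢ Finset.range M, F jk
      = ∑ jk ∈ (Finset.range M ×ˢ Finset.range M).filter (fun jk => jk.1 + jk.2 < M), F jk := by
    refine (Finset.sum_filter_of_ne fun jk _ hne => ?_).symm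
    by_contra hlt
    apply hne
    show (a ^ jk.1 / (jk.1.factorial : ℝ) * (b ^ jk.2 / (jk.2.factorial : ℝ))) •
      (⇑(derivative (R := ℝ)))^[2 * (jk.1 + jk.2)] p = 0
    rw [Polynomial.iterate_derivative_eq_zero (p := p) (x := 2 * (jk.1 + jk.2)) (by omega),
      smul_zero]
  have h2 : (Finset.range M ×ˢ Finset.range M).filter (fun jk => jk.1 + jk.2 < M)
      = (Finset.range M).biUnion (fun m => Finset.HasAntidiagonal.antidiagonal m) := by
    ext jk
    simp only [Finset.mem_filter, Finset.mem_product, Finset.mem_range, Finset.mem_biUnion,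
      Finset.HasAntidiagonal.mem_antidiagonal]
    constructor
    · rintro ⟨⟨_, _⟩, h⟩; exact ⟨jk.1 + jk.2, h, rfl⟩
    · rintro ⟨m, hm, h⟩; omega
  have h3 : ∀ m ∈ Finset.range M, ∑ jk ∈ Finset.HasAntidiagonal.antidiagonal m, F jk
      = ((a + b) ^ m / (m.factorial : ℝ)) • (⇑(derivative (R := ℝ)))^[2 * m] p := by
    intro m _
    have : ∑ jk ∈ Finset.HasAntidiagonal.antidiagonal m, F jk
        = (∑ jk ∈ Finset.HasAntidiagonal.antidiagonal m,
            (a ^ jk.1 / (jk.1.factorial : ℝ) * (b ^ jk.2 / (jk.2.factorial : ℝ)))) •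
          (⇑(derivative (R := ℝ)))^[2 * m] p := by
      rw [Finset.sum_smul]
      refine Finset.sum_congr rfl fun jk hjk => ?_
      rw [Finset.HasAntidiagonal.mem_antidiagonal] at hjk
      show (a ^ jk.1 / (jk.1.factorial : ℝ) * (b ^ jk.2 / (jk.2.factorial : ℝ))) •
        (⇑(derivative (R := ℝ)))^[2 * (jk.1 + jk.2)] p = _
      rw [hjk]
    rw [this]
    congr 1
    rw [Finset.Nat.sum_antidiagonal_eq_sum_range_succ_mk, add_pow, Finset.sum_div]
    refine Finset.sum_congr rfl fun i hi => ?_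
    rw [Finset.mem_range] at hi
    have hle : i ≤ m := by omega
    have hnat : (m.choose i : ℝ) * (i.factorial : ℝ) * ((m - i).factorial : ℝ)
        = (m.factorial : ℝ) := by exact_mod_cast Nat.choose_mul_factorial_mul_factorial hle
    have hi0 : (i.factorial : ℝ) ≠ 0 := Nat.cast_ne_zero.mpr i.factorial_ne_zero
    have hmi0 : ((m - i).factorial : ℝ) ≠ 0 := Nat.cast_ne_zero.mpr (m - i).factorial_ne_zero
    have hm0 : (m.factorial : ℝ) ≠ 0 := Nat.cast_ne_zero.mpr m.factorial_ne_zero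
    have hc0 : (m.choose i : ℝ) ≠ 0 :=
      Nat.cast_ne_zero.mpr (Nat.choose_pos hle).ne'
    rw [← hnat]
    field_simp
  have h4 : Set.PairwiseDisjoint (↑(Finset.range M))
      (fun m : ℕ => Finset.HasAntidiagonal.antidiagonal m) := by
    intro m _ m' _ hne
    simp only [Function.onFun, Finset.disjoint_left, Finset.HasAntidiagonal.mem_antidiagonal]
    intro jk h h'
    exact hne (by omega)
  rw [h1, h2, Finset.sum_biUnion h4, Finset.sum_congr rfl h3, E, hM]

lemma iterD_X_mul (p : Polynomial ℝ) : ∀ m : ℕ,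
    (⇑(derivative (R := ℝ)))^[m + 1] (X * p) =
      X * (⇑(derivative (R := ℝ)))^[m + 1] p
        + C ((m : ℝ) + 1) * (⇑(derivative (R := ℝ)))^[m] p := by
  intro m
  induction m with
  | zero =>
    simp [derivative_mul]
    ring
  | succ m ih =>
    have h1 : (⇑(derivative (R := ℝ)))^[m + 1 + 1] (X * p)
        = derivative ((⇑(derivative (R := ℝ)))^[m + 1] (X * p)) :=
      Function.iterate_succ_apply' _ _ _
    rw [h1, ih, derivative_add, derivative_mul, derivative_mul, derivative_X,
      derivative_C, one_mul, zero_mul, zero_add]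
    have h2 : derivative ((⇑(derivative (R := ℝ)))^[m + 1] p)
        = (⇑(derivative (R := ℝ)))^[m + 1 + 1] p := (Function.iterate_succ_apply' _ _ _).symm
    have h3 : derivative ((⇑(derivative (R := ℝ)))^[m] p)
        = (⇑(derivative (R := ℝ)))^[m + 1] p := (Function.iterate_succ_apply' _ _ _).symm
    rw [h2, h3]
    push_cast
    simp only [C_add, C_1]
    ring

lemma E_X_mul (a : ℝ) (p : Polynomial ℝ) :
    E a (X * p) = X * E a p + (2 * a) • E a (derivative p) := by
  set M := p.natDegree + 1 with hM
  have hXp : (X * p).natDegree < M + 1 := by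
    refine lt_of_le_of_lt (natDegree_mul_le) ?_
    simp only [natDegree_X]
    omega
  have hD : (derivative p).natDegree < M + 1 :=
    lt_of_le_of_lt p.natDegree_derivative_le (by omega)
  rw [E_eq a (X * p) (M := M + 1) hXp, E_eq a p (M := M + 1) (by omega),
    E_eq a (derivative p) (M := M + 1) hD]
  rw [Finset.sum_range_succ' (fun k => (a ^ k / (k.factorial : ℝ)) •
    (⇑(derivative (R := ℝ)))^[2 * k] (X * p)) M]
  have hterm : ∀ k : ℕ, (a ^ (k+1) / ((k+1).factorial : ℝ)) •
      (⇑(derivative (R := ℝ)))^[2 * (k+1)] (X * p)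
      = X * ((a ^ (k+1) / ((k+1).factorial : ℝ)) • (⇑(derivative (R := ℝ)))^[2 * (k+1)] p)
        + (2 * a) • ((a ^ k / (k.factorial : ℝ)) •
            (⇑(derivative (R := ℝ)))^[2 * k] (derivative p)) := by
    intro k
    have h2k : 2 * (k + 1) = (2 * k + 1) + 1 := by omega
    rw [h2k, iterD_X_mul p (2 * k + 1), smul_add, mul_smul_comm]
    congr 1
    rw [Function.iterate_succ_apply (⇑(derivative (R := ℝ))) (2 * k) p,
      ← smul_eq_C_mul, smul_smul, smul_smul]
    congr 1
    have hfac : ((k+1).factorial : ℝ) = ((k : ℝ) + 1) * (k.factorial : ℝ) := by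
      rw [Nat.factorial_succ]; push_cast; ring
    have hk1 : ((k : ℝ) + 1) ≠ 0 := by positivity
    have hkf : (k.factorial : ℝ) ≠ 0 := Nat.cast_ne_zero.mpr k.factorial_ne_zero
    rw [hfac]
    push_cast
    field_simp
    ring
  rw [Finset.sum_congr rfl (fun k _ => hterm k), Finset.sum_add_distrib]
  rw [Finset.sum_range_succ' (fun k => (a ^ k / (k.factorial : ℝ)) •
    (⇑(derivative (R := ℝ)))^[2 * k] p) M]
  rw [Finset.smul_sum]
  rw [Finset.sum_range_succ (fun k => (2 * a) • ((a ^ k / (k.factorial : ℝ)) •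
    (⇑(derivative (R := ℝ)))^[2 * k] (derivative p))) M]
  have hzero : (⇑(derivative (R := ℝ)))^[2 * M] (derivative p) = 0 :=
    Polynomial.iterate_derivative_eq_zero
      (lt_of_le_of_lt p.natDegree_derivative_le (by omega))
  rw [hzero, smul_zero, smul_zero, add_zero, mul_add, Finset.mul_sum]
  simp only [pow_zero, Nat.factorial_zero, Nat.cast_one, div_one, one_smul,
    Function.iterate_zero_apply]
  abel

/-- Hermite polynomial of variance `s`, degree `n`. -/
noncomputable def ψ (s : ℝ) (n : ℕ) : Polynomial ℝ := E (-s/2) (X ^ n)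

lemma psi_succ (s : ℝ) (n : ℕ) :
    ψ s (n + 1) = X * ψ s n - s • derivative (ψ s n) := by
  unfold ψ
  rw [pow_succ, mul_comm (X ^ n) X, E_X_mul, derivative_E]
  have : (2 * (-s/2)) = -s := by ring
  rw [this, neg_smul, sub_eq_add_neg]

lemma numberOp_psi (s : ℝ) (n : ℕ) : numberOp s (ψ s n) = (n : ℝ) • ψ s n := by
  induction n with
  | zero =>
    have : ψ s 0 = 1 := by
      unfold ψ E
      simp
    simp [this, numberOp]
  | succ n ih =>
    rw [psi_succ]
    set q := ψ s n with hq
    have ih2 : X * derivative q - C s * derivative (derivative q) = C (n:ℝ) * q := by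
      have h := ih
      unfold numberOp at h
      rwa [smul_eq_C_mul, smul_eq_C_mul] at h
    have ih3 : derivative q + X * derivative (derivative q)
        - C s * derivative (derivative (derivative q)) = C (n:ℝ) * derivative q := by
      have h := congrArg derivative ih2
      simp only [derivative_sub, derivative_mul, derivative_X, derivative_C, one_mul,
        zero_mul, zero_add] at h
      linear_combination h
    unfold numberOp
    simp only [derivative_add, derivative_sub, derivative_mul, derivative_smul, derivative_X, derivative_C,
      one_mul, zero_mul, zero_add, smul_eq_C_mul]
    push_cast
    simp only [C_add, C_1]
    linear_combination (X : Polynomial ℝ) * ih2 - C s * ih3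

lemma numberOp_smul (s c : ℝ) (q : Polynomial ℝ) :
    numberOp s (c • q) = c • numberOp s q := by
  unfold numberOp
  rw [derivative_smul, derivative_smul, smul_sub, mul_smul_comm, smul_comm s c]

lemma numberOp_iterate_psi (s : ℝ) (k n : ℕ) :
    (numberOp s)^[k] (ψ s n) = ((n : ℝ) ^ k) • ψ s n := by
  induction k with
  | zero => simp
  | succ k ih =>
    rw [Function.iterate_succ_apply', ih, numberOp_smul, numberOp_psi, smul_smul, pow_succ]

lemma numberOp_sum {ι : Type*} (s : ℝ) (u : Finset ι) (f : ι → Polynomial ℝ) :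
    numberOp s (∑ i ∈ u, f i) = ∑ i ∈ u, numberOp s (f i) := by
  unfold numberOp
  simp only [derivative_sum]
  rw [Finset.mul_sum, Finset.smul_sum, ← Finset.sum_sub_distrib]

lemma heatOp_eq_E (t : ℝ) (p : Polynomial ℝ) : heatOp t p = E (t / 2) p := by
  unfold heatOp E
  apply Finset.sum_subset
  · exact Finset.range_subset_range.mpr (Nat.succ_le_succ (Nat.div_le_self _ _))
  intro k hk hk'
  simp only [Finset.mem_range, not_lt] at hk hk'
  rw [Polynomial.iterate_derivative_eq_zero (p := p) (x := 2 * k) (by omega), smul_zero]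

lemma eval_E_X_pow (a : ℝ) (n : ℕ) {l : ℝ} (hl : l ≠ 0) (x : ℝ) :
    eval (l * x) (E a (X ^ n)) = l ^ n * eval x (E (a / l ^ 2) (X ^ n)) := by
  unfold E
  simp only [natDegree_X_pow]
  rw [eval_finset_sum, eval_finset_sum, Finset.mul_sum]
  refine Finset.sum_congr rfl fun k _ => ?_
  rw [Polynomial.iterate_derivative_X_pow_eq_smul]
  simp only [eval_smul, eval_pow, eval_X, smul_eq_mul]
  by_cases h : 2 * k ≤ n
  · have hln : l ^ n = l ^ (n - 2 * k) * (l ^ 2) ^ k := by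
      rw [← pow_mul, ← pow_add]
      congr 1
      omega
    rw [hln, mul_pow, div_pow]
    have hl2 : (l ^ 2) ^ k ≠ 0 := by positivity
    field_simp
  · have hdesc : n.descFactorial (2 * k) = 0 :=
      Nat.descFactorial_eq_zero_iff_lt.mpr (by omega)
    simp [hdesc]

end HermiteAux

open HermiteAux

/-- The Hermite semigroup at time `τ = (1/2) log(s/(s-t))` equals the heat semigroup at
time `t` composed with the dilation by `√((s-t)/s)`. -/
theorem hermiteSemigroup_eq_dilated_heatSemigroup
    (s t : ℝ) (ht : 0 < t) (hts : t < s) (τ : ℝ)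
    (hτ : τ = (1 / 2) * Real.log (s / (s - t))) (p : Polynomial ℝ) (x : ℝ) :
    ∑' k : ℕ, ((-τ) ^ k / (k.factorial : ℝ)) *
        Polynomial.eval x ((numberOp s)^[k] p) =
      Polynomial.eval (Real.sqrt ((s - t) / s) * x) (heatOp t p) := by
  classical
  have hs : 0 < s := lt_trans ht hts
  have hst : 0 < s - t := by linarith
  set l : ℝ := Real.sqrt ((s - t) / s) with hldef
  have hl2 : l ^ 2 = (s - t) / s := Real.sq_sqrt (by positivity)
  have hlpos : 0 < l := Real.sqrt_pos.mpr (by positivity)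
  have hl0 : l ≠ 0 := hlpos.ne'
  obtain ⟨q, hqdef⟩ : ∃ q : Polynomial ℝ, q = E (s / 2) p := ⟨_, rfl⟩
  have hp : p = ∑ n ∈ Finset.range (q.natDegree + 1), q.coeff n • ψ s n := by
    have h1 : E (-s/2) q = p := by
      rw [hqdef, E_comp]
      have h0 : (-s/2 + s/2 : ℝ) = 0 := by ring
      rw [h0, E_zero_apply]
    have h2 : q = ∑ n ∈ Finset.range (q.natDegree + 1),
        q.coeff n • (X ^ n : Polynomial ℝ) := by
      conv_lhs => rw [q.as_sum_range]
      exact Finset.sum_congr rfl fun n _ => (smul_X_eq_monomial).symm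
    calc p = E (-s/2) q := h1.symm
    _ = ∑ n ∈ Finset.range (q.natDegree + 1), q.coeff n • ψ s n := by
        conv_lhs => rw [h2, E_sum]
        exact Finset.sum_congr rfl fun n _ => by rw [E_smul]; rfl
  have hiter : ∀ k : ℕ, (numberOp s)^[k] p
      = ∑ n ∈ Finset.range (q.natDegree + 1), (q.coeff n * (n:ℝ)^k) • ψ s n := by
    intro k
    induction k with
    | zero => simpa using hp
    | succ k ih =>
      rw [Function.iterate_succ_apply', ih, numberOp_sum]
      refine Finset.sum_congr rfl fun n _ => ?_
      rw [numberOp_smul, numberOp_psi, smul_smul, pow_succ]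
      ring_nf
  have hterm : ∀ k : ℕ, ((-τ)^k / (k.factorial : ℝ)) * Polynomial.eval x ((numberOp s)^[k] p)
      = ∑ n ∈ Finset.range (q.natDegree + 1),
          (q.coeff n * Polynomial.eval x (ψ s n)) * ((-(τ * (n:ℝ)))^k / (k.factorial : ℝ)) := by
    intro k
    rw [hiter k, eval_finset_sum, Finset.mul_sum]
    refine Finset.sum_congr rfl fun n _ => ?_
    rw [eval_smul, smul_eq_mul]
    have hnp : (-(τ * (n:ℝ)))^k = (-τ)^k * (n:ℝ)^k := by
      rw [← neg_mul, mul_pow]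
    rw [hnp]
    ring
  have hsum : ∀ n ∈ Finset.range (q.natDegree + 1), Summable (fun k : ℕ =>
      (q.coeff n * Polynomial.eval x (ψ s n)) * ((-(τ * (n:ℝ)))^k / (k.factorial : ℝ))) :=
    fun n _ => (Real.summable_pow_div_factorial _).mul_left _
  rw [tsum_congr hterm, Summable.tsum_finsetSum hsum]
  have hexp : ∀ n : ℕ, ∑' k : ℕ,
      (q.coeff n * Polynomial.eval x (ψ s n)) * ((-(τ * (n:ℝ)))^k / (k.factorial : ℝ))
      = (q.coeff n * Polynomial.eval x (ψ s n)) * Real.exp (-(τ * (n:ℝ))) := by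
    intro n
    rw [tsum_mul_left]
    congr 1
    rw [Real.exp_eq_exp_ℝ, NormedSpace.exp_eq_tsum_div]
  rw [Finset.sum_congr rfl fun n _ => hexp n]
  have hRHS : heatOp t p = ∑ n ∈ Finset.range (q.natDegree + 1),
      q.coeff n • E ((t - s)/2) (X ^ n) := by
    rw [heatOp_eq_E, hp, E_sum]
    refine Finset.sum_congr rfl fun n _ => ?_
    rw [E_smul]
    congr 1
    show E (t/2) (E (-s/2) (X ^ n)) = _
    rw [E_comp]
    congr 1
    ring
  rw [hRHS, eval_finset_sum]
  have hlexp : l = Real.exp (-τ) := by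
    rw [hτ]
    have h1 : s / (s - t) = ((s - t)/s)⁻¹ := by rw [inv_div]
    have hu : (0:ℝ) < (s - t)/s := by positivity
    rw [h1, Real.log_inv, hldef, Real.sqrt_eq_rpow, Real.rpow_def_of_pos hu]
    congr 1
    ring
  refine Finset.sum_congr rfl fun n _ => ?_
  rw [eval_smul, smul_eq_mul, eval_E_X_pow _ n hl0 x]
  have harg : (t - s)/2 / l^2 = -s/2 := by
    rw [hl2]
    field_simp
    ring
  rw [harg]
  have hψ : E (-s/2) (X ^ n : Polynomial ℝ) = ψ s n := rfl
  rw [hψ]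
  have hle : Real.exp (-(τ * (n:ℝ))) = l ^ n := by
    rw [hlexp, ← Real.exp_nat_mul]
    congr 1
    ring
  rw [hle]
  ring
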